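/- Let γ : ℝ → ℝ² satisfy |γ(s) − γ(s')| ≤ |s − s'| for all s, s' ∈ ℝ, assumption (a1), and assumption (a2). Then for every R > 0 there exists a point x ∈ ℝ² whose distance from the curve exceeds R, i.e. |x − γ(s)| > R for all s ∈ ℝ; equivalently, there is a disc of radius R in the plane that does not intersect Γ = γ(ℝ). -/

import Mathlib

open MeasureTheory Real

/-- The plane `ℝ²` with its Euclidean norm. -/
abbrev Plane := EuclideanSpace ℝ (Fin 2)

/-- **Existence of large discs avoiding the curve.** If `γ : ℝ → ℝ²` is 1-Lipschitz and
satisfies (a1) and the asymptotic straightness assumption (a2), then for every `R > 0` there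
is a point of the plane at distance greater than `R` from the whole curve `Γ = γ(ℝ)`;
i.e. there is a disc of radius `R` not intersecting `Γ`. -/
theorem exists_disc_avoiding_curve
    (γ : ℝ → Plane)
    (hLip : ∀ s s' : ℝ, ‖γ s - γ s'‖ ≤ |s - s'|)
    (c : ℝ) (hc0 : 0 < c) (hc1 : c < 1)
    (ha1 : ∀ s s' : ℝ, c * |s - s'| ≤ ‖γ s - γ s'‖)
    (d μ ω : ℝ) (hd : 0 < d) (hμ : 0 < μ) (hω0 : 0 < ω) (hω1 : ω < 1)
    (ha2 : ∀ s s' : ℝ, ω < s / s' → s / s' < ω⁻¹ →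
      1 - ‖γ s - γ s'‖ / |s - s'| ≤ d * (1 + |s + s'| ^ (2 * μ)) ^ (-(1 / 2) : ℝ)) :
    ∀ R : ℝ, 0 < R → ∃ x : Plane, ∀ s : ℝ, R < ‖x - γ s‖ := by
  intro R hR
  obtain ⟨C, hCdef⟩ : ∃ C : ℝ, C = ‖γ 0‖ := ⟨_, rfl⟩
  have hC0 : 0 ≤ C := hCdef ▸ norm_nonneg _
  obtain ⟨a, hadef⟩ : ∃ a : ℝ, a = 8 * R / c := ⟨_, rfl⟩
  obtain ⟨b, hbdef⟩ : ∃ b : ℝ, b = a * (R + C) + 20 * R ^ 2 := ⟨_, rfl⟩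
  have ha : 0 < a := by rw [hadef]; positivity
  have hb : 0 < b := by rw [hbdef]; positivity
  obtain ⟨L, hLdef⟩ : ∃ L : ℝ, L = a + b + 1 := ⟨_, rfl⟩
  have hL1 : 1 ≤ L := by rw [hLdef]; linarith
  have hL0 : 0 < L := by linarith
  obtain ⟨T, hTdef⟩ : ∃ T : ℝ, T = (L + R + C) / c := ⟨_, rfl⟩
  have hT0 : 0 < T := by rw [hTdef]; positivity
  obtain ⟨n, hnlow, hnle⟩ : ∃ n : ℕ, T / R + 1 ≤ (n : ℝ) ∧ (n : ℝ) ≤ T / R + 2 := by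
    refine ⟨⌈T / R⌉₊ + 1, ?_, ?_⟩
    · push_cast
      linarith [Nat.le_ceil (T / R)]
    · push_cast
      linarith [Nat.ceil_lt_add_one (by positivity : (0:ℝ) ≤ T / R)]
  -- algebraic identities
  have hTc : T * c = L + R + C := by rw [hTdef]; exact div_mul_cancel₀ _ hc0.ne'
  have hac : a * c = 8 * R := by rw [hadef]; exact div_mul_cancel₀ _ hc0.ne'
  have heq : a * L + b = 8 * R * T + 20 * R ^ 2 := by
    rw [hbdef]
    linear_combination (-a) * hTc + T * hac
  have hnR : (n : ℝ) * R ≤ T + 2 * R := by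
    have h2 := mul_le_mul_of_nonneg_right hnle hR.le
    rwa [add_mul, div_mul_cancel₀ _ hR.ne'] at h2
  have hreal : ((2 * n + 1 : ℕ) : ℝ) * (2 * R) ^ 2 < L ^ 2 := by
    have hcast : ((2 * n + 1 : ℕ) : ℝ) = 2 * (n : ℝ) + 1 := by push_cast; ring
    rw [hcast]
    nlinarith [mul_le_mul_of_nonneg_right hnR (by positivity : (0:ℝ) ≤ 8 * R),
      mul_le_mul_of_nonneg_left hL1 hb.le]
  -- the bad set
  obtain ⟨B, hBdef⟩ : ∃ B : Set Plane,
      B = ⋃ k ∈ Finset.Icc (-(n : ℤ)) (n : ℤ), Metric.closedBall (γ (k * R)) (2 * R) :=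
    ⟨_, rfl⟩
  -- volume computations
  obtain ⟨V, hVdef⟩ : ∃ V : ENNReal, V = volume (Metric.ball (0 : Plane) 1) := ⟨_, rfl⟩
  have hVpos : V ≠ 0 := by
    rw [hVdef]; exact (Metric.measure_ball_pos volume (0 : Plane) one_pos).ne'
  have hVtop : V ≠ ⊤ := by rw [hVdef]; exact measure_ball_lt_top.ne
  have hbig : volume (Metric.closedBall (0 : Plane) L) = ENNReal.ofReal (L ^ 2) * V := by
    rw [Measure.addHaar_closedBall volume (0 : Plane) hL0.le, finrank_euclideanSpace_fin,
      hVdef]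
  have hsmall : ∀ k : ℤ,
      volume (Metric.closedBall (γ (k * R)) (2 * R)) = ENNReal.ofReal ((2 * R) ^ 2) * V := by
    intro k
    rw [Measure.addHaar_closedBall volume _ (by positivity), finrank_euclideanSpace_fin, hVdef]
  have hcard : (Finset.Icc (-(n : ℤ)) (n : ℤ)).card = 2 * n + 1 := by
    rw [Int.card_Icc]; omega
  have hBle : volume B ≤ ((2 * n + 1 : ℕ) : ENNReal) * (ENNReal.ofReal ((2 * R) ^ 2) * V) := by
    rw [hBdef]
    calc volume (⋃ k ∈ Finset.Icc (-(n : ℤ)) (n : ℤ), Metric.closedBall (γ (k * R)) (2 * R))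
        ≤ ∑ k ∈ Finset.Icc (-(n : ℤ)) (n : ℤ),
          volume (Metric.closedBall (γ (k * R)) (2 * R)) := measure_biUnion_finset_le _ _
      _ = ((2 * n + 1 : ℕ) : ENNReal) * (ENNReal.ofReal ((2 * R) ^ 2) * V) := by
          rw [Finset.sum_congr rfl fun k _ => hsmall k, Finset.sum_const, hcard, nsmul_eq_mul]
  have hlt : ((2 * n + 1 : ℕ) : ENNReal) * (ENNReal.ofReal ((2 * R) ^ 2) * V)
      < ENNReal.ofReal (L ^ 2) * V := by
    rw [← mul_assoc]
    apply (ENNReal.mul_lt_mul_iff_left hVpos hVtop).mpr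
    rw [← ENNReal.ofReal_natCast, ← ENNReal.ofReal_mul (by positivity)]
    exact (ENNReal.ofReal_lt_ofReal_iff (by positivity)).mpr hreal
  -- there is a point of the big disc outside B
  have hex : ∃ x ∈ Metric.closedBall (0 : Plane) L, x ∉ B := by
    by_contra h
    push_neg at h
    have hsub : Metric.closedBall (0 : Plane) L ⊆ B := fun x hx => h x hx
    have hmono := measure_mono (μ := volume) hsub
    rw [hbig] at hmono
    exact absurd (hmono.trans hBle) (not_le.mpr hlt)
  obtain ⟨x, hx, hxB⟩ := hex
  have hxL : ‖x‖ ≤ L := mem_closedBall_zero_iff.mp hx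
  refine ⟨x, fun s => ?_⟩
  by_contra hcon
  push_neg at hcon
  -- γ s is close to the origin, so |s| is controlled
  have h1 : ‖γ s‖ ≤ L + R := by
    have h2 := norm_sub_norm_le (γ s) x
    rw [norm_sub_rev] at h2
    linarith
  have h2 : c * |s| ≤ L + R + C := by
    have h3 := ha1 s 0
    have h4 : ‖γ s - γ 0‖ ≤ ‖γ s‖ + C := by
      rw [hCdef]; exact norm_sub_le _ _
    simp only [sub_zero] at h3
    linarith
  have hsT : |s| ≤ T := by
    rw [hTdef, le_div_iff₀ hc0]
    linarith [mul_comm c |s|]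
  -- round s to the grid
  obtain ⟨k, hkdef⟩ : ∃ k : ℤ, k = ⌊s / R + 1 / 2⌋ := ⟨_, rfl⟩
  have hfl : (k : ℝ) ≤ s / R + 1 / 2 := hkdef ▸ Int.floor_le _
  have hfl' : s / R + 1 / 2 < (k : ℝ) + 1 := hkdef ▸ Int.lt_floor_add_one _
  have hsR : s / R * R = s := div_mul_cancel₀ _ hR.ne'
  have hks : |s - k * R| ≤ R := by
    have hA : (k : ℝ) * R ≤ s + 1 / 2 * R := by
      have h9 := mul_le_mul_of_nonneg_right hfl hR.le
      rw [add_mul, hsR] at h9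
      linarith
    have hB : s + 1 / 2 * R < (k : ℝ) * R + R := by
      have h9 := mul_lt_mul_of_pos_right hfl' hR
      rw [add_mul, add_mul, hsR, one_mul] at h9
      linarith
    rw [abs_le]
    constructor <;> linarith
  have hkmem : k ∈ Finset.Icc (-(n : ℤ)) (n : ℤ) := by
    have hkabs : |(k : ℝ)| * R ≤ T + R := by
      have h5 : |(k : ℝ) * R| ≤ T + R := by
        calc |(k : ℝ) * R| = |s - (s - k * R)| := by
              rw [show s - (s - (k : ℝ) * R) = (k : ℝ) * R by ring]
          _ ≤ |s| + |s - k * R| := abs_sub _ _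
          _ ≤ T + R := add_le_add hsT hks
      rwa [abs_mul, abs_of_pos hR] at h5
    have hkn : |(k : ℝ)| ≤ (n : ℝ) := by
      have h6 : (T / R + 1) * R = T + R := by
        rw [add_mul, div_mul_cancel₀ _ hR.ne', one_mul]
      have h7 : |(k : ℝ)| * R ≤ (n : ℝ) * R :=
        hkabs.trans (h6 ▸ mul_le_mul_of_nonneg_right hnlow hR.le)
      exact le_of_mul_le_mul_right h7 hR
    have h8 : |k| ≤ (n : ℤ) := by
      rw [← Int.cast_abs] at hkn
      exact_mod_cast hkn
    exact Finset.mem_Icc.mpr (abs_le.mp h8)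
  -- x belongs to B, contradiction
  apply hxB
  rw [hBdef]
  refine Set.mem_biUnion hkmem ?_
  rw [Metric.mem_closedBall, dist_eq_norm]
  calc ‖x - γ (k * R)‖ ≤ ‖x - γ s‖ + ‖γ s - γ (k * R)‖ := by
        have h8 : x - γ (k * R) = (x - γ s) + (γ s - γ (k * R)) := by abel
        rw [h8]; exact norm_add_le _ _
    _ ≤ R + R := add_le_add hcon ((hLip s (k * R)).trans hks)
    _ = 2 * R := by ring
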